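/- The singular values of the matrix A_α(P⃗_n) = α Δ⁺ + (1-α) A of the directed path P⃗_n on n vertices (arcs (v_1,v_2),...,(v_{n-1},v_n)) are 0 with multiplicity 1, together with √(2α² - 2α + 1 + 2α(1-α)cos(jπ/n)) for j = 1,2,...,n-1. -/

import Mathlib

open Matrix Real

/-- Adjacency matrix of the directed path on `n` vertices, arcs `(v_i, v_{i+1})`. -/
def pathAdj (n : ℕ) : Matrix (Fin n) (Fin n) ℝ :=
  Matrix.of fun i j => if (j : ℕ) = (i : ℕ) + 1 then 1 else 0

/-- Outdegree diagonal matrix of the directed path: outdegree 1 except the last vertex. -/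
def pathOut (n : ℕ) : Matrix (Fin n) (Fin n) ℝ :=
  Matrix.diagonal fun i => if (i : ℕ) < n - 1 then 1 else 0

namespace PathSV

open Polynomial Finset

variable (n : ℕ) (α : ℝ)


lemma cos_sum_range (m : ℕ) (t : ℝ) (h : Real.sin (t/2) ≠ 0) :
    ∑ i ∈ Finset.range m, Real.cos (((i:ℝ)+1)*t)
      = (Real.sin (((m:ℝ)+1/2)*t) - Real.sin (t/2)) / (2 * Real.sin (t/2)) := by
  have key : ∀ i : ℕ, Real.sin ((((i:ℕ)+1:ℕ):ℝ)*t + t/2) - Real.sin (((i:ℝ))*t + t/2)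
      = 2 * Real.sin (t/2) * Real.cos (((i:ℝ)+1)*t) := by
    intro i
    rw [Real.sin_sub_sin]
    push_cast
    ring_nf
  have tel := Finset.sum_range_sub (fun i : ℕ => Real.sin (((i:ℝ))*t + t/2)) m
  simp only [key] at tel
  rw [← Finset.mul_sum] at tel
  rw [eq_div_iff (mul_ne_zero two_ne_zero h)]
  have e1 : ((m:ℝ)+1/2)*t = (m:ℝ)*t + t/2 := by ring
  rw [e1]
  have e2 : ((0:ℕ):ℝ)*t + t/2 = t/2 := by push_cast; ring
  rw [e2] at tel
  linarith [tel]

lemma sin_half_ne_zero (n : ℕ) (hn : 0 < n) (k : ℤ) (hk0 : k ≠ 0) (hk : k.natAbs < 2*n) :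
    Real.sin ((k:ℝ)*π/n/2) ≠ 0 := by
  intro hs
  rw [Real.sin_eq_zero_iff] at hs
  obtain ⟨m, hm⟩ := hs
  have hn' : (n:ℝ) ≠ 0 := Nat.cast_ne_zero.2 hn.ne'
  have hπ : (π:ℝ) ≠ 0 := Real.pi_ne_zero
  have h2 : (m:ℝ) * (2*n) * π = (k:ℝ) * π := by
    field_simp at hm
    linear_combination π * hm
  have h2' : (m:ℝ) * (2*n) = k := mul_right_cancel₀ hπ h2
  have h3 : m * (2*(n:ℤ)) = k := by exact_mod_cast h2'
  have h4 : k.natAbs = m.natAbs * (2*(n:ℤ)).natAbs := by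
    rw [← h3, Int.natAbs_mul]
  have h4' : (2*(n:ℤ)).natAbs = 2*n := by omega
  have h5 : 1 ≤ m.natAbs := by
    rcases eq_or_ne m 0 with rfl | hm0
    · simp at h3; omega
    · exact Int.natAbs_pos.2 hm0
  have h6 : 2*n ≤ k.natAbs := by
    rw [h4, h4']
    exact Nat.le_mul_of_pos_left _ (by omega)
  omega





lemma cos_sum_int (n : ℕ) (hn : 0 < n) (k : ℤ) (hk0 : k ≠ 0) (hk : k.natAbs < 2*n) :
    ∑ i ∈ Finset.range n, Real.cos (((i:ℝ)+1)*((k:ℝ)*π/n)) = ((-1:ℝ)^k - 1)/2 := by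
  have hn' : (n:ℝ) ≠ 0 := Nat.cast_ne_zero.2 hn.ne'
  have hs := sin_half_ne_zero n hn k hk0 hk
  rw [cos_sum_range n _ hs]
  have e1 : ((n:ℝ)+1/2)*((k:ℝ)*π/n) = (k:ℝ)*π/n/2 + k*π := by
    field_simp
    ring
  rw [e1, Real.sin_add_int_mul_pi]
  rw [div_eq_div_iff (mul_ne_zero two_ne_zero hs) two_ne_zero]
  ring





lemma neg_one_zpow_eq_of_parity (k l : ℤ) (h : Even (k - l)) : ((-1:ℝ))^k = (-1:ℝ)^l := by
  have : ((-1:ℝ))^k = (-1:ℝ)^(k-l) * (-1:ℝ)^l := by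
    rw [← zpow_add₀ (by norm_num : (-1:ℝ) ≠ 0)]
    ring_nf
  rw [this, h.neg_one_zpow, one_mul]

lemma sin_orth (n : ℕ) (hn : 0 < n) (a b : ℕ) (ha : a < n-1) (hb : b < n-1) :
    ∑ i ∈ Finset.range n, Real.sin (((i:ℝ)+1)*((a:ℝ)+1)*π/n) * Real.sin (((i:ℝ)+1)*((b:ℝ)+1)*π/n)
      = if a = b then (n:ℝ)/2 else 0 := by
  have hn' : (n:ℝ) ≠ 0 := Nat.cast_ne_zero.2 hn.ne'
  have hterm : ∀ i : ℕ,
      Real.sin (((i:ℝ)+1)*((a:ℝ)+1)*π/n) * Real.sin (((i:ℝ)+1)*((b:ℝ)+1)*π/n)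
        = (Real.cos (((i:ℝ)+1)*((((a:ℤ)-(b:ℤ)):ℝ)*π/n))
            - Real.cos (((i:ℝ)+1)*((((a:ℤ)+(b:ℤ)+2):ℝ)*π/n))) / 2 := by
    intro i
    rw [Real.cos_sub_cos]
    have e1 : ((((i:ℝ)+1)*((((a:ℤ)-(b:ℤ)):ℝ)*π/n)) + (((i:ℝ)+1)*((((a:ℤ)+(b:ℤ)+2):ℝ)*π/n)))/2
        = ((i:ℝ)+1)*((a:ℝ)+1)*π/n := by push_cast; field_simp; ring
    have e2 : ((((i:ℝ)+1)*((((a:ℤ)-(b:ℤ)):ℝ)*π/n)) - (((i:ℝ)+1)*((((a:ℤ)+(b:ℤ)+2):ℝ)*π/n)))/2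
        = -(((i:ℝ)+1)*((b:ℝ)+1)*π/n) := by push_cast; field_simp; ring
    rw [e1, e2, Real.sin_neg]
    ring
  simp only [hterm]
  rw [← Finset.sum_div, Finset.sum_sub_distrib]
  have h2b := cos_sum_int n hn ((a:ℤ)+(b:ℤ)+2) (by omega) (by omega)
  by_cases hab : a = b
  · subst hab
    have h2a : ∑ i ∈ Finset.range n, Real.cos (((i:ℝ)+1)*((((a:ℤ)-(a:ℤ)):ℝ)*π/n)) = n := by
      have e : ∀ i : ℕ, Real.cos (((i:ℝ)+1)*((((a:ℤ)-(a:ℤ)):ℝ)*π/n)) = 1 := by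
        intro i; simp
      simp only [e]
      simp
    rw [h2a]
    push_cast at h2b ⊢
    rw [h2b]
    have : ((-1:ℝ))^((a:ℤ)+(a:ℤ)+2) = 1 := Even.neg_one_zpow ⟨(a:ℤ)+1, by ring⟩
    rw [this, if_pos rfl]
    ring
  · have h2a := cos_sum_int n hn ((a:ℤ)-(b:ℤ)) (by omega) (by omega)
    push_cast at h2a h2b ⊢
    rw [h2a, h2b]
    have : ((-1:ℝ))^((a:ℤ)-(b:ℤ)) = ((-1:ℝ))^((a:ℤ)+(b:ℤ)+2) :=
      neg_one_zpow_eq_of_parity _ _ ⟨-(b:ℤ)-1, by ring⟩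
    rw [this, if_neg hab]
    ring




lemma EE : pathOut n * pathOut n = pathOut n := by
  rw [pathOut, Matrix.diagonal_mul_diagonal]
  have : (fun i : Fin n => (if (i:ℕ)<n-1 then (1:ℝ) else 0) * (if (i:ℕ)<n-1 then (1:ℝ) else 0))
      = fun i : Fin n => if (i:ℕ)<n-1 then (1:ℝ) else 0 := by
    funext i
    split_ifs <;> norm_num
  rw [this]

lemma NNt : pathAdj n * (pathAdj n)ᵀ = pathOut n := by
  ext i j
  rw [Matrix.mul_apply, pathOut, Matrix.diagonal_apply]
  have : ∀ k : Fin n, pathAdj n i k * (pathAdj n)ᵀ k j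
      = (if (k:ℕ) = (i:ℕ)+1 then (1:ℝ) else 0) * (if (k:ℕ) = (j:ℕ)+1 then (1:ℝ) else 0) := by
    intro k
    rw [Matrix.transpose_apply, pathAdj]
    simp only [Matrix.of_apply]
  simp only [this]
  by_cases h : i = j
  · subst h
    by_cases h2 : (i:ℕ)+1 < n
    · rw [if_pos rfl, if_pos (by omega)]
      rw [Finset.sum_eq_single (⟨(i:ℕ)+1, h2⟩ : Fin n)]
      · simp
      · intro k _ hk
        have : (k:ℕ) ≠ (i:ℕ)+1 := fun hc => hk (Fin.ext hc)
        simp [this]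
      · intro hc; exact absurd (Finset.mem_univ _) hc
    · rw [if_pos rfl, if_neg (by omega)]
      apply Finset.sum_eq_zero
      intro k _
      have : (k:ℕ) ≠ (i:ℕ)+1 := by have := k.isLt; omega
      simp [this]
  · rw [if_neg h]
    apply Finset.sum_eq_zero
    intro k _
    have hij : (i:ℕ) ≠ (j:ℕ) := fun hc => h (Fin.ext hc)
    by_cases h1 : (k:ℕ) = (i:ℕ)+1
    · have : (k:ℕ) ≠ (j:ℕ)+1 := by omega
      simp [this]
    · simp [h1]

lemma matrix_eq :
    (α • pathOut n + (1 - α) • pathAdj n) * (α • pathOut n + (1 - α) • pathAdj n)ᵀ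
      = (α^2+(1-α)^2) • pathOut n + (α*(1-α)) • (pathOut n * (pathAdj n)ᵀ)
        + (α*(1-α)) • (pathAdj n * pathOut n) := by
  have hEt : (pathOut n)ᵀ = pathOut n := Matrix.diagonal_transpose _
  rw [Matrix.transpose_add, Matrix.transpose_smul, Matrix.transpose_smul, hEt]
  rw [Matrix.add_mul, Matrix.mul_add, Matrix.mul_add]
  simp only [Matrix.smul_mul, Matrix.mul_smul, EE, NNt, smul_smul]
  module




noncomputable def lam (j : ℕ) : ℝ :=
  2 * α ^ 2 - 2 * α + 1 + 2 * α * (1 - α) * Real.cos (((j : ℝ) + 1) * Real.pi / n)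

noncomputable def dv : Fin n → ℝ := fun j => if (j:ℕ) < n-1 then lam n α (j:ℕ) else 0

noncomputable def Pm : Matrix (Fin n) (Fin n) ℝ :=
  Matrix.of fun i j =>
    if (i:ℕ) = n-1 ∧ (j:ℕ) = n-1 then 1
    else Real.sin ((((i:ℕ):ℝ)+1)*(((j:ℕ):ℝ)+1)*π/n)

lemma Nt_mul (Q : Matrix (Fin n) (Fin n) ℝ) (i j : Fin n) :
    ((pathAdj n)ᵀ * Q) i j = if h : 1 ≤ (i:ℕ) then Q ⟨(i:ℕ)-1, by omega⟩ j else 0 := by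
  rw [Matrix.mul_apply]
  have : ∀ k : Fin n, (pathAdj n)ᵀ i k * Q k j
      = (if (i:ℕ) = (k:ℕ)+1 then (1:ℝ) else 0) * Q k j := by
    intro k
    rw [Matrix.transpose_apply, pathAdj]
    simp only [Matrix.of_apply]
  simp only [this]
  by_cases h : 1 ≤ (i:ℕ)
  · rw [dif_pos h, Finset.sum_eq_single (⟨(i:ℕ)-1, by omega⟩ : Fin n)]
    · rw [if_pos (by simp; omega), one_mul]
    · intro k _ hk
      have : (i:ℕ) ≠ (k:ℕ)+1 := by
        intro hc
        exact hk (Fin.ext (by simp; omega))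
      simp [this]
    · intro hc; exact absurd (Finset.mem_univ _) hc
  · rw [dif_neg h]
    apply Finset.sum_eq_zero
    intro k _
    have : (i:ℕ) ≠ (k:ℕ)+1 := by omega
    simp [this]

lemma N_mul (Q : Matrix (Fin n) (Fin n) ℝ) (i j : Fin n) :
    (pathAdj n * Q) i j = if h : (i:ℕ)+1 < n then Q ⟨(i:ℕ)+1, h⟩ j else 0 := by
  rw [Matrix.mul_apply]
  have : ∀ k : Fin n, pathAdj n i k * Q k j
      = (if (k:ℕ) = (i:ℕ)+1 then (1:ℝ) else 0) * Q k j := by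
    intro k
    rw [pathAdj]
    simp only [Matrix.of_apply]
  simp only [this]
  by_cases h : (i:ℕ)+1 < n
  · rw [dif_pos h, Finset.sum_eq_single (⟨(i:ℕ)+1, h⟩ : Fin n)]
    · rw [if_pos rfl, one_mul]
    · intro k _ hk
      have : (k:ℕ) ≠ (i:ℕ)+1 := fun hc => hk (Fin.ext hc)
      simp [this]
    · intro hc; exact absurd (Finset.mem_univ _) hc
  · rw [dif_neg h]
    apply Finset.sum_eq_zero
    intro k _
    have : (k:ℕ) ≠ (i:ℕ)+1 := by have := k.isLt; omega
    simp [this]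

lemma E_mul (Q : Matrix (Fin n) (Fin n) ℝ) (i j : Fin n) :
    (pathOut n * Q) i j = (if (i:ℕ) < n-1 then (1:ℝ) else 0) * Q i j := by
  rw [pathOut, Matrix.diagonal_mul]





lemma sin_top (hn : 0 < n) (m : ℕ) :
    Real.sin (((n:ℕ):ℝ)*(((m:ℕ):ℝ)+1)*π/n) = 0 := by
  have hn' : (n:ℝ) ≠ 0 := Nat.cast_ne_zero.2 hn.ne'
  have e : ((n:ℕ):ℝ)*(((m:ℕ):ℝ)+1)*π/n = ((m+1:ℕ):ℝ)*π := by
    push_cast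
    field_simp
  rw [e, Real.sin_nat_mul_pi]

lemma eigen (hn : 0 < n) :
    ((α^2+(1-α)^2) • pathOut n + (α*(1-α)) • (pathOut n * (pathAdj n)ᵀ)
        + (α*(1-α)) • (pathAdj n * pathOut n)) * Pm n
      = Pm n * Matrix.diagonal (dv n α) := by
  have hn' : (n:ℝ) ≠ 0 := Nat.cast_ne_zero.2 hn.ne'
  ext i j
  rw [Matrix.mul_diagonal]
  rw [Matrix.add_mul, Matrix.add_mul, Matrix.smul_mul, Matrix.smul_mul, Matrix.smul_mul,
    Matrix.mul_assoc, Matrix.mul_assoc]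
  rw [Matrix.add_apply, Matrix.add_apply, Matrix.smul_apply, Matrix.smul_apply,
    Matrix.smul_apply, smul_eq_mul, smul_eq_mul, smul_eq_mul]
  rw [E_mul, E_mul, Nt_mul, N_mul]
  by_cases hj : (j:ℕ) < n-1
  · have hdv : dv n α j = lam n α (j:ℕ) := if_pos hj
    have hPm : ∀ k : Fin n, Pm n k j
        = Real.sin ((((k:ℕ):ℝ)+1)*(((j:ℕ):ℝ)+1)*π/n) := by
      intro k
      rw [Pm, Matrix.of_apply, if_neg (by omega)]
    rw [hdv, hPm i]
    by_cases hi : (i:ℕ) < n-1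
    · have h1n : (i:ℕ)+1 < n := by omega
      rw [if_pos hi, dif_pos h1n, E_mul]
      have t2 : (if h : 1 ≤ (i:ℕ) then Pm n ⟨(i:ℕ)-1, by omega⟩ j else 0)
          = Real.sin (((i:ℕ):ℝ)*(((j:ℕ):ℝ)+1)*π/n) := by
        by_cases h1 : 1 ≤ (i:ℕ)
        · rw [dif_pos h1, hPm]
          have e : ((((i:ℕ)-1:ℕ)):ℝ)+1 = ((i:ℕ):ℝ) := by
            have : ((i:ℕ)-1:ℕ) + 1 = (i:ℕ) := by omega
            exact_mod_cast congrArg (Nat.cast : ℕ → ℝ) this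
          rw [Fin.val_mk, e]
        · rw [dif_neg h1]
          have h0 : ((i:ℕ):ℝ) = 0 := by
            have : (i:ℕ) = 0 := by omega
            exact_mod_cast congrArg (Nat.cast : ℕ → ℝ) this
          rw [h0]
          simp
      rw [t2]
      have t3 : (if ((⟨(i:ℕ)+1, h1n⟩ : Fin n):ℕ) < n-1 then (1:ℝ) else 0)
            * Pm n ⟨(i:ℕ)+1, h1n⟩ j
          = Real.sin ((((i:ℕ):ℝ)+2)*(((j:ℕ):ℝ)+1)*π/n) := by
        rw [Fin.val_mk]
        by_cases h2 : (i:ℕ)+1 < n-1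
        · rw [if_pos h2, hPm, one_mul, Fin.val_mk]
          have e : ((((i:ℕ)+1:ℕ)):ℝ)+1 = ((i:ℕ):ℝ)+2 := by push_cast; ring
          rw [e]
        · rw [if_neg h2, zero_mul]
          have e : (((i:ℕ)):ℝ)+2 = ((n:ℕ):ℝ) := by
            have : (i:ℕ)+2 = n := by omega
            exact_mod_cast congrArg (Nat.cast : ℕ → ℝ) this
          rw [e, sin_top n hn]
      rw [t3]
      have hadd : Real.sin (((i:ℕ):ℝ)*(((j:ℕ):ℝ)+1)*π/n)
            + Real.sin ((((i:ℕ):ℝ)+2)*(((j:ℕ):ℝ)+1)*π/n)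
          = 2 * Real.sin ((((i:ℕ):ℝ)+1)*(((j:ℕ):ℝ)+1)*π/n)
            * Real.cos ((((j:ℕ):ℝ)+1)*π/n) := by
        rw [show Real.sin ((((i:ℕ):ℝ)+2)*(((j:ℕ):ℝ)+1)*π/n)
            = - Real.sin (-((((i:ℕ):ℝ)+2)*(((j:ℕ):ℝ)+1)*π/n)) from by
          rw [Real.sin_neg]; ring]
        rw [← sub_eq_add_neg, Real.sin_sub_sin]
        have e1 : ((((i:ℕ):ℝ)*(((j:ℕ):ℝ)+1)*π/n) - -((((i:ℕ):ℝ)+2)*(((j:ℕ):ℝ)+1)*π/n))/2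
            = (((i:ℕ):ℝ)+1)*(((j:ℕ):ℝ)+1)*π/n := by field_simp; ring
        have e2 : ((((i:ℕ):ℝ)*(((j:ℕ):ℝ)+1)*π/n) + -((((i:ℕ):ℝ)+2)*(((j:ℕ):ℝ)+1)*π/n))/2
            = -((((j:ℕ):ℝ)+1)*π/n) := by field_simp; ring
        rw [e1, e2, Real.cos_neg]
      rw [lam]
      linear_combination (α*(1-α)) * hadd
    · have hie : (i:ℕ) = n-1 := by have := i.isLt; omega
      rw [if_neg hi, dif_neg (by omega : ¬ ((i:ℕ)+1 < n))]
      have e : (((i:ℕ)):ℝ)+1 = ((n:ℕ):ℝ) := by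
        have : (i:ℕ)+1 = n := by omega
        exact_mod_cast congrArg (Nat.cast : ℕ → ℝ) this
      rw [e, sin_top n hn]
      ring
  · have hdv : dv n α j = 0 := if_neg hj
    have hjv : (j:ℕ) = n-1 := by have := j.isLt; omega
    have hPmval : ∀ k : Fin n, Pm n k j = if (k:ℕ) = n-1 then 1 else 0 := by
      intro k
      rw [Pm, Matrix.of_apply]
      by_cases hk : (k:ℕ) = n-1
      · rw [if_pos ⟨hk, hjv⟩, if_pos hk]
      · rw [if_neg (by tauto), if_neg hk]
        have e : (((j:ℕ)):ℝ)+1 = ((n:ℕ):ℝ) := by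
          have : (j:ℕ)+1 = n := by omega
          exact_mod_cast congrArg (Nat.cast : ℕ → ℝ) this
        rw [e, show (((k:ℕ):ℝ)+1)*((n:ℕ):ℝ)*π/(n:ℝ)
            = ((n:ℕ):ℝ)*(((k:ℕ):ℝ)+1)*π/n from by ring, sin_top n hn]
    rw [hdv, mul_zero]
    by_cases hi : (i:ℕ) < n-1
    · rw [if_pos hi]
      have v1 : Pm n i j = 0 := by rw [hPmval, if_neg (by omega)]
      have v2 : (if h : 1 ≤ (i:ℕ) then Pm n ⟨(i:ℕ)-1, by omega⟩ j else 0) = 0 := by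
        by_cases h1 : 1 ≤ (i:ℕ)
        · rw [dif_pos h1, hPmval, if_neg (by rw [Fin.val_mk]; omega)]
        · rw [dif_neg h1]
      have h1n : (i:ℕ)+1 < n := by omega
      rw [v1, v2, dif_pos h1n, E_mul]
      have v3 : Pm n ⟨(i:ℕ)+1, h1n⟩ j = if (i:ℕ)+1 = n-1 then 1 else 0 := by
        rw [hPmval, Fin.val_mk]
      rw [v3]
      by_cases h2 : (i:ℕ)+1 = n-1
      · rw [if_pos h2, if_neg (by rw [Fin.val_mk]; omega)]
        ring
      · rw [if_neg h2]
        ring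
    · rw [if_neg hi, dif_neg (by omega : ¬ ((i:ℕ)+1 < n))]
      ring






lemma PtP (hn : 0 < n) :
    (Pm n)ᵀ * Pm n
      = Matrix.diagonal (fun a : Fin n => if (a:ℕ) < n-1 then (n:ℝ)/2 else 1) := by
  ext a c
  rw [Matrix.mul_apply, Matrix.diagonal_apply]
  simp only [Matrix.transpose_apply]
  by_cases ha : (a:ℕ) < n-1
  · by_cases hc : (c:ℕ) < n-1
    · have hterm : ∀ k : Fin n, Pm n k a * Pm n k c
          = Real.sin ((((k:ℕ):ℝ)+1)*(((a:ℕ):ℝ)+1)*π/n)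
            * Real.sin ((((k:ℕ):ℝ)+1)*(((c:ℕ):ℝ)+1)*π/n) := by
        intro k
        rw [Pm, Matrix.of_apply, Matrix.of_apply, if_neg (by omega), if_neg (by omega)]
      simp only [hterm]
      rw [Fin.sum_univ_eq_sum_range
        (fun m : ℕ => Real.sin (((m:ℝ)+1)*(((a:ℕ):ℝ)+1)*π/n)
          * Real.sin (((m:ℝ)+1)*(((c:ℕ):ℝ)+1)*π/n)) n]
      rw [sin_orth n hn (a:ℕ) (c:ℕ) ha hc]
      by_cases hac : a = c
      · rw [if_pos (by rw [hac]), if_pos hac, if_pos ha]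
      · rw [if_neg (fun hc2 => hac (Fin.ext hc2)), if_neg hac]
    · have hcv : (c:ℕ) = n-1 := by have := c.isLt; omega
      have hzero : ∀ k : Fin n, Pm n k a * Pm n k c = 0 := by
        intro k
        by_cases hk : (k:ℕ) = n-1
        · have : Pm n k a = 0 := by
            rw [Pm, Matrix.of_apply, if_neg (by omega)]
            rw [show (((k:ℕ)):ℝ)+1 = ((n:ℕ):ℝ) from by
              have : (k:ℕ)+1 = n := by omega
              exact_mod_cast congrArg (Nat.cast : ℕ → ℝ) this]
            exact sin_top n hn a
          rw [this, zero_mul]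
        · have : Pm n k c = 0 := by
            rw [Pm, Matrix.of_apply, if_neg (by omega)]
            rw [show (((c:ℕ)):ℝ)+1 = ((n:ℕ):ℝ) from by
              have : (c:ℕ)+1 = n := by omega
              exact_mod_cast congrArg (Nat.cast : ℕ → ℝ) this]
            rw [show ((((k:ℕ)):ℝ)+1)*((n:ℕ):ℝ)*π/(n:ℝ)
                = ((n:ℕ):ℝ)*(((k:ℕ):ℝ)+1)*π/n from by ring]
            exact sin_top n hn k
          rw [this, mul_zero]
      rw [Finset.sum_eq_zero (fun k _ => hzero k), if_neg (fun h => by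
        have : (a:ℕ) = (c:ℕ) := by rw [h]
        omega)]
  · have hav : (a:ℕ) = n-1 := by have := a.isLt; omega
    by_cases hc : (c:ℕ) < n-1
    · have hzero : ∀ k : Fin n, Pm n k a * Pm n k c = 0 := by
        intro k
        by_cases hk : (k:ℕ) = n-1
        · have : Pm n k c = 0 := by
            rw [Pm, Matrix.of_apply, if_neg (by omega)]
            rw [show (((k:ℕ)):ℝ)+1 = ((n:ℕ):ℝ) from by
              have : (k:ℕ)+1 = n := by omega
              exact_mod_cast congrArg (Nat.cast : ℕ → ℝ) this]
            exact sin_top n hn c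
          rw [this, mul_zero]
        · have : Pm n k a = 0 := by
            rw [Pm, Matrix.of_apply, if_neg (by omega)]
            rw [show (((a:ℕ)):ℝ)+1 = ((n:ℕ):ℝ) from by
              have : (a:ℕ)+1 = n := by omega
              exact_mod_cast congrArg (Nat.cast : ℕ → ℝ) this]
            rw [show ((((k:ℕ)):ℝ)+1)*((n:ℕ):ℝ)*π/(n:ℝ)
                = ((n:ℕ):ℝ)*(((k:ℕ):ℝ)+1)*π/n from by ring]
            exact sin_top n hn k
          rw [this, zero_mul]
      rw [Finset.sum_eq_zero (fun k _ => hzero k), if_neg (fun h => by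
        have : (a:ℕ) = (c:ℕ) := by rw [h]
        omega)]
    · have hcv : (c:ℕ) = n-1 := by have := c.isLt; omega
      have hac : a = c := Fin.ext (by omega)
      subst hac
      rw [if_pos rfl, if_neg (by omega)]
      have hPm1 : ∀ k : Fin n, Pm n k a = if (k:ℕ) = n-1 then 1 else 0 := by
        intro k
        rw [Pm, Matrix.of_apply]
        by_cases hk : (k:ℕ) = n-1
        · rw [if_pos ⟨hk, hav⟩, if_pos hk]
        · rw [if_neg (by tauto), if_neg hk]
          rw [show (((a:ℕ)):ℝ)+1 = ((n:ℕ):ℝ) from by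
            have : (a:ℕ)+1 = n := by omega
            exact_mod_cast congrArg (Nat.cast : ℕ → ℝ) this]
          rw [show ((((k:ℕ)):ℝ)+1)*((n:ℕ):ℝ)*π/(n:ℝ)
              = ((n:ℕ):ℝ)*(((k:ℕ):ℝ)+1)*π/n from by ring]
          exact sin_top n hn k
      simp only [hPm1]
      rw [Finset.sum_eq_single (⟨n-1, by omega⟩ : Fin n)]
      · rw [if_pos (by simp), mul_one]
      · intro k _ hk
        have : (k:ℕ) ≠ n-1 := fun hc2 => hk (Fin.ext (by simp [hc2]))
        simp [this]
      · intro hc2; exact absurd (Finset.mem_univ _) hc2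

lemma det_Pm_ne (hn : 0 < n) : (Pm n).det ≠ 0 := by
  intro h
  have h1 := congrArg Matrix.det (PtP n hn)
  rw [Matrix.det_mul, Matrix.det_transpose, Matrix.det_diagonal, h, mul_zero] at h1
  have h2 : ∏ a : Fin n, (if (a:ℕ) < n-1 then (n:ℝ)/2 else 1) ≠ 0 := by
    apply Finset.prod_ne_zero_iff.2
    intro a _
    split_ifs
    · positivity
    · norm_num
  exact h2 h1.symm

lemma charpoly_similar (M P D : Matrix (Fin n) (Fin n) ℝ)
    (h : M * P = P * D) (hP : P.det ≠ 0) : M.charpoly = D.charpoly := by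
  have hcomm : charmatrix M * P.map Polynomial.C = P.map Polynomial.C * charmatrix D := by
    rw [charmatrix, charmatrix, Matrix.sub_mul, Matrix.mul_sub]
    congr 1
    · exact (Matrix.scalar_commute Polynomial.X (fun r => Commute.all _ r) (P.map Polynomial.C)).eq
    · simp only [← RingHom.mapMatrix_apply]
      rw [← _root_.map_mul, ← _root_.map_mul, h]
  have hdet := congrArg Matrix.det hcomm
  rw [Matrix.det_mul, Matrix.det_mul] at hdet
  have hPC : ((Polynomial.C : ℝ →+* ℝ[X]).mapMatrix P).det = Polynomial.C P.det :=
    (RingHom.map_det _ _).symm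
  have hC0 : (P.map Polynomial.C).det ≠ 0 := by
    rw [show P.map Polynomial.C = (Polynomial.C : ℝ →+* ℝ[X]).mapMatrix P from rfl, hPC]
    exact Polynomial.C_ne_zero.2 hP
  rw [mul_comm ((P.map Polynomial.C).det)] at hdet
  exact mul_right_cancel₀ hC0 hdet




lemma charpoly_diag (hn : 0 < n) :
    (Matrix.diagonal (dv n α)).charpoly
      = (((0:ℝ) ::ₘ (Multiset.range (n-1)).map (lam n α)).map
          (fun x => Polynomial.X - Polynomial.C x)).prod := by
  rw [Matrix.charpoly_of_upperTriangular _ (Matrix.blockTriangular_diagonal _)]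
  obtain ⟨m, rfl⟩ : ∃ m, n = m+1 := ⟨n-1, by omega⟩
  simp only [Matrix.diagonal_apply_eq]
  rw [Fin.prod_univ_castSucc]
  have hlast : dv (m+1) α (Fin.last m) = 0 := by
    rw [dv, if_neg (by simp)]
  have hcast : ∀ i : Fin m, dv (m+1) α (Fin.castSucc i) = lam (m+1) α (i:ℕ) := by
    intro i
    have h : ((Fin.castSucc i : Fin (m+1)):ℕ) < (m+1)-1 := by simpa using i.isLt
    show (if ((Fin.castSucc i : Fin (m+1)):ℕ) < (m+1)-1
        then lam (m+1) α ((Fin.castSucc i : Fin (m+1)):ℕ) else 0) = lam (m+1) α (i:ℕ)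
    rw [if_pos h, Fin.coe_castSucc]
  rw [hlast]
  simp only [hcast]
  rw [Multiset.map_cons, Multiset.prod_cons, Multiset.map_map]
  have h1 : ∏ i : Fin m, (Polynomial.X - Polynomial.C (lam (m+1) α (i:ℕ)))
      = ∏ j ∈ Finset.range m, (Polynomial.X - Polynomial.C (lam (m+1) α j)) :=
    Fin.prod_univ_eq_prod_range (fun j => Polynomial.X - Polynomial.C (lam (m+1) α j)) m
  have h2 : ((Multiset.range ((m+1)-1)).map
        ((fun x => Polynomial.X - Polynomial.C x) ∘ lam (m+1) α)).prod
      = ∏ j ∈ Finset.range m, (Polynomial.X - Polynomial.C (lam (m+1) α j)) := by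
    simp only [Nat.add_sub_cancel]
    rfl
  rw [h1, h2]
  ring

end PathSV

open PathSV in
/-- The singular values of `A_α(P⃗_n)`, i.e. the square roots of the eigenvalues of
`A_α A_αᵀ`, are `0` (once) and `√(2α²-2α+1+2α(1-α)cos(jπ/n))` for `j = 1,…,n-1`. -/
theorem stmt_0 (n : ℕ) (hn : 0 < n) (α : ℝ) (hα0 : 0 ≤ α) (hα1 : α < 1) :
    ((((α • pathOut n + (1 - α) • pathAdj n) *
        (α • pathOut n + (1 - α) • pathAdj n)ᵀ).charpoly.roots).map Real.sqrt) =
      (0 : ℝ) ::ₘ (Multiset.range (n - 1)).map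
        (fun j => Real.sqrt (2 * α ^ 2 - 2 * α + 1 +
          2 * α * (1 - α) * Real.cos (((j : ℝ) + 1) * Real.pi / n))) := by
  rw [matrix_eq n α]
  rw [charpoly_similar n _ (Pm n) (Matrix.diagonal (dv n α)) (eigen n α hn) (det_Pm_ne n hn)]
  rw [charpoly_diag n α hn, Polynomial.roots_multiset_prod_X_sub_C]
  rw [Multiset.map_cons, Real.sqrt_zero, Multiset.map_map]
  congr 1
  rw [show ((do
      let a ← Multiset.range (n-1)
      pure ((a : ℕ) : ℝ)) : Multiset ℝ) = (Multiset.range (n-1)).map (Nat.cast : ℕ → ℝ) from by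
    simp [Multiset.bind_singleton]]
  rw [Multiset.map_map]
  apply Multiset.map_congr rfl
  intro j _
  simp only [Function.comp_apply, lam]
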